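/- Let (V,q) be a 4-dimensional nondegenerate quadratic space and τ an isometry such that K(τ) is a 2-dimensional totally isotropic subspace. Then K(τ) = K(τ)^⊥ = R(τ), and in particular (τ - id)² = 0. -/

import Mathlib

theorem wall_stmt11 {F V : Type*} [Field F] [AddCommGroup V] [Module F V]
    [FiniteDimensional F V] (q : QuadraticForm F V)
    (hq : LinearMap.BilinForm.Nondegenerate (QuadraticMap.polarBilin q))
    (hV : Module.finrank F V = 4)
    (τ : V →ₗ[F] V) (hτ : ∀ x, q (τ x) = q x)
    (hK : Module.finrank F (LinearMap.ker (τ - LinearMap.id)) = 2)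
    (hiso : ∀ x ∈ LinearMap.ker (τ - LinearMap.id), q x = 0) :
    LinearMap.ker (τ - LinearMap.id) =
      LinearMap.BilinForm.orthogonal (QuadraticMap.polarBilin q)
        (LinearMap.ker (τ - LinearMap.id)) ∧
    LinearMap.ker (τ - LinearMap.id) = LinearMap.range (τ - LinearMap.id) ∧
    (τ - LinearMap.id) ∘ₗ (τ - LinearMap.id) = 0 := by
  set K := LinearMap.ker (τ - LinearMap.id) with hKdef
  have hrefl : (QuadraticMap.polarBilin q).IsRefl := fun x y h => by
    simpa [QuadraticMap.polarBilin, QuadraticMap.polar_comm] using h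
  -- membership in K means τ x = x
  have hmemK : ∀ x, x ∈ K ↔ τ x = x := by
    intro x
    simp [hKdef, LinearMap.mem_ker, sub_eq_zero]
  -- polar is preserved by τ
  have hpolar : ∀ x y, QuadraticMap.polar q (τ x) (τ y) = QuadraticMap.polar q x y := by
    intro x y
    simp [QuadraticMap.polar, ← map_add, hτ]
  -- K ⊆ K^⊥
  have hKle : K ≤ LinearMap.BilinForm.orthogonal (QuadraticMap.polarBilin q) K := by
    intro x hx y hy
    have hxy : x + y ∈ K := K.add_mem hx hy
    have : QuadraticMap.polar q y x = 0 := by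
      have := hiso _ hxy
      rw [QuadraticMap.polar_comm]
      simp [QuadraticMap.polar, add_comm, this, hiso _ hx, hiso _ hy]
    simpa [LinearMap.BilinForm.IsOrtho, QuadraticMap.polarBilin] using this
  have hdimO : Module.finrank F (LinearMap.BilinForm.orthogonal (QuadraticMap.polarBilin q) K) = 2 := by
    rw [LinearMap.BilinForm.finrank_orthogonal hq K, hV, hK]
  have h1 : K = LinearMap.BilinForm.orthogonal (QuadraticMap.polarBilin q) K :=
    Submodule.eq_of_le_of_finrank_eq hKle (by rw [hK, hdimO])
  -- range ⊆ K^⊥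
  have hrle : LinearMap.range (τ - LinearMap.id) ≤ LinearMap.BilinForm.orthogonal (QuadraticMap.polarBilin q) K := by
    rintro _ ⟨v, rfl⟩ x hx
    have hτx : τ x = x := (hmemK x).1 hx
    have : QuadraticMap.polar q x (τ v - v) = 0 := by
      rw [QuadraticMap.polar_sub_right]
      have : QuadraticMap.polar q x (τ v) = QuadraticMap.polar q x v := by
        conv_rhs => rw [← hpolar x v, hτx]
      rw [this, sub_self]
    simpa [LinearMap.BilinForm.IsOrtho, QuadraticMap.polarBilin, LinearMap.sub_apply] using this
  have hdimR : Module.finrank F (LinearMap.range (τ - LinearMap.id)) = 2 := by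
    have := LinearMap.finrank_range_add_finrank_ker (τ - LinearMap.id)
    rw [hV, ← hKdef, hK] at this
    omega
  have h2 : LinearMap.range (τ - LinearMap.id) = LinearMap.BilinForm.orthogonal (QuadraticMap.polarBilin q) K :=
    Submodule.eq_of_le_of_finrank_eq hrle (by rw [hdimR, hdimO])
  refine ⟨h1, h1.trans h2.symm, ?_⟩
  ext v
  have : ((τ - LinearMap.id : V →ₗ[F] V)) v ∈ K := by
    rw [h1, ← h2]; exact LinearMap.mem_range_self _ v
  simpa [LinearMap.mem_ker, hKdef] using this
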